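/- Let r ≥ 2 and define, for r ≤ l ≤ 2r-2 and valid indices, C_{k,k}^l = (2(l-r+k+1)+1)/(2(l+1)) and C_{k,k+1}^l = (2(r-k)-1)/(2(l+1)). Then the iterated dyadic combination ∑_{j_0=0}^1 C_{0,j_0}^{2r-2} ∑_{j_1=j_0}^{j_0+1} C_{j_0,j_1}^{2r-3} ⋯ ∑_{j_{r-1}=j_{r-2}}^{j_{r-2}+1} C_{j_{r-2},j_{r-1}}^r · e_{j_{r-1}} equals the vector (C̄_0^r, ..., C̄_{r-1}^r) with C̄_k^r = binom(2r,2k+1)/2^(2r-1), where e_j denotes the j-th standard basis vector of ℝ^r. -/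

import Mathlib

open Finset

noncomputable def wP (r k : ℕ) : ℝ := ∏ i ∈ Finset.range k, (2*(r:ℝ) - 2*i - 1)
noncomputable def wD (r m : ℕ) : ℝ := ∏ t ∈ Finset.range m, (2*(2*(r:ℝ) - 1 - t))
noncomputable def wF (r m k : ℕ) : ℝ := (m.choose k : ℝ) * wP r k * wP r (m-k) / wD r m

lemma wD_pos (r m : ℕ) (hm : m ≤ 2*r-1) (hr : 1 ≤ r) : 0 < wD r m := by
  apply Finset.prod_pos
  intro t ht
  have ht' : t + 2 ≤ 2*r := by have := Finset.mem_range.1 ht; omega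
  have : (t:ℝ) + 2 ≤ 2*r := by exact_mod_cast ht'
  linarith

lemma wP_succ (r k : ℕ) : wP r (k+1) = wP r k * (2*(r:ℝ) - 2*k - 1) := by
  simp [wP, Finset.prod_range_succ]

lemma wD_succ (r m : ℕ) : wD r (m+1) = wD r m * (2*(2*(r:ℝ) - 1 - m)) := by
  simp [wD, Finset.prod_range_succ]

lemma wD_ne (r m : ℕ) (hm : m ≤ r - 1) (hr : 2 ≤ r) : wD r m ≠ 0 :=
  ne_of_gt (wD_pos r m (by omega) (by omega))

lemma lvl_ne (r m : ℕ) (hm : m ≤ r - 1) (hr : 2 ≤ r) :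
    (2*(2*(r:ℝ) - 1 - m)) ≠ 0 := by
  have h : (m:ℝ) + 2 ≤ 2*r := by exact_mod_cast (by omega : m + 2 ≤ 2*r)
  intro h0; nlinarith

lemma wF_step0 (r m : ℕ) (hm : m ≤ r - 1) (hr : 2 ≤ r) :
    wF r (m+1) 0 = wF r m 0 * ((2*(r:ℝ) - 2*m - 1)/(2*(2*(r:ℝ)-1-m))) := by
  simp only [wF, Nat.choose_zero_right, Nat.cast_one, Nat.sub_zero, wP_succ, wD_succ]
  have h1 := wD_ne r m hm hr
  have h2 := lvl_ne r m hm hr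
  field_simp

lemma wF_step (r m a : ℕ) (hm : m ≤ r - 1) (hr : 2 ≤ r) :
    wF r (m+1) (a+1) = wF r m a * ((2*(r:ℝ) - 2*a - 1)/(2*(2*(r:ℝ)-1-m)))
      + wF r m (a+1) * ((2*(r:ℝ) - 2*m + 2*((a:ℝ)+1) - 1)/(2*(2*(r:ℝ)-1-m))) := by
  have h1 := wD_ne r m hm hr
  have h2 := lvl_ne r m hm hr
  rcases le_or_gt (a+1) m with hab | hab
  · obtain ⟨b, rfl⟩ : ∃ b, m = a + b + 1 := ⟨m - (a+1), by omega⟩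
    simp only [wF, show a + b + 1 - a = b + 1 from by omega,
      show a + b + 1 - (a+1) = b from by omega,
      show a + b + 1 + 1 - (a+1) = b + 1 from by omega,
      Nat.choose_succ_succ (a + b + 1) a, Nat.cast_add, wP_succ, wD_succ]
    push_cast
    field_simp
    ring
  · rcases eq_or_lt_of_le (Nat.succ_le_of_lt hab) with hab2 | hab2
    · obtain rfl : a = m := by omega
      simp only [wF, Nat.choose_self, Nat.succ_sub_one, Nat.choose_succ_self, Nat.cast_zero,
        Nat.sub_self, wP_succ, wD_succ, Nat.cast_one, Nat.add_sub_cancel]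
      push_cast
      field_simp
      ring
    · have e1 : (m+1).choose (a+1) = 0 := Nat.choose_eq_zero_of_lt (by omega)
      have e2 : m.choose a = 0 := Nat.choose_eq_zero_of_lt (by omega)
      have e3 : m.choose (a+1) = 0 := Nat.choose_eq_zero_of_lt (by omega)
      simp [wF, e1, e2, e3]

lemma wP_eq (r : ℕ) : ∀ n, n ≤ r →
    wP r n = ((2*r).factorial : ℝ) * ((r-n).factorial) /
      ((r.factorial : ℝ) * ((2*r-2*n).factorial) * 2^n) := by
  intro n
  induction n with
  | zero =>
    intro _
    have h1 : (r.factorial : ℝ) ≠ 0 := by exact_mod_cast r.factorial_ne_zero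
    have h2 : (((2*r).factorial : ℕ) : ℝ) ≠ 0 := by exact_mod_cast (2*r).factorial_ne_zero
    simp [wP]
    field_simp
  | succ n ih =>
    intro hn
    obtain ⟨c, rfl⟩ : ∃ c, r = n + c + 1 := ⟨r - n - 1, by omega⟩
    rw [wP_succ, ih (by omega)]
    simp only [show n + c + 1 - n = c + 1 from by omega,
      show n + c + 1 - (n+1) = c from by omega,
      show 2*(n+c+1) - 2*n = 2*c+2 from by omega,
      show 2*(n+c+1) - 2*(n+1) = 2*c from by omega]
    have e1 : ((c+1).factorial : ℝ) = (c+1) * (c.factorial) := by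
      rw [Nat.factorial_succ]; push_cast; ring
    have e2 : ((2*c+2).factorial : ℝ) = (2*c+2) * (2*c+1) * ((2*c).factorial) := by
      rw [show 2*c+2 = (2*c+1)+1 from by omega, Nat.factorial_succ, Nat.factorial_succ]
      push_cast; ring
    have h1 : ((n+c+1).factorial : ℝ) ≠ 0 := by exact_mod_cast (n+c+1).factorial_ne_zero
    have h2 : (((2*(n+c+1)).factorial : ℕ) : ℝ) ≠ 0 := by
      exact_mod_cast (2*(n+c+1)).factorial_ne_zero
    have h3 : ((c.factorial : ℕ) : ℝ) ≠ 0 := by exact_mod_cast c.factorial_ne_zero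
    have h4 : (((2*c).factorial : ℕ) : ℝ) ≠ 0 := by exact_mod_cast (2*c).factorial_ne_zero
    rw [e1, e2]
    push_cast
    field_simp
    ring

lemma wD_eq (r : ℕ) : ∀ m, m ≤ 2*r-1 → 1 ≤ r →
    wD r m = 2^m * ((2*r-1).factorial : ℝ) / ((2*r-1-m).factorial : ℝ) := by
  intro m
  induction m with
  | zero =>
    intro _ _
    have h : (((2*r-1).factorial : ℕ) : ℝ) ≠ 0 := by exact_mod_cast (2*r-1).factorial_ne_zero
    simp [wD]
    field_simp
  | succ m ih =>
    intro hm hr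
    obtain ⟨c, hc⟩ : ∃ c, 2*r-1 = m + c + 1 := ⟨2*r-1 - m - 1, by omega⟩
    rw [wD_succ, ih (by omega) hr, hc]
    simp only [show m + c + 1 - m = c + 1 from by omega,
      show m + c + 1 - (m+1) = c from by omega]
    have e1 : ((c+1).factorial : ℝ) = (c+1) * (c.factorial) := by
      rw [Nat.factorial_succ]; push_cast; ring
    have e2 : (2*(r:ℝ) - 1 - m) = c + 1 := by
      have : (2*r - 1 : ℕ) = m + c + 1 := hc
      have h2 : ((2*r - 1 : ℕ) : ℝ) = m + c + 1 := by exact_mod_cast this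
      have h3 : ((2*r - 1 : ℕ) : ℝ) = 2*r - 1 := by
        push_cast [Nat.cast_sub (by omega : 1 ≤ 2*r)]; ring
      rw [h3] at h2; linarith
    have h1 : ((c.factorial : ℕ) : ℝ) ≠ 0 := by exact_mod_cast c.factorial_ne_zero
    have h3 : ((c+1).factorial : ℝ) ≠ 0 := by exact_mod_cast (c+1).factorial_ne_zero
    rw [e1, e2]
    push_cast
    field_simp
    ring

lemma wF_final (r k0 : ℕ) (hr : 2 ≤ r) (hk : k0 < r) :
    wF r (r-1) k0 = (((2*r).choose (2*k0+1)) : ℝ) / 2^(2*r-1) := by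
  obtain ⟨b, rfl⟩ : ∃ b, r = k0 + b + 1 := ⟨r - k0 - 1, by omega⟩
  set a := k0 with ha
  have hchoose1 : (((a+b).choose a : ℕ) : ℝ)
      = ((a+b).factorial : ℝ) / ((a.factorial : ℝ) * (b.factorial : ℝ)) := by
    rw [Nat.cast_choose ℝ (by omega : a ≤ a + b), show a + b - a = b from by omega]
  rw [wF, show (a+b+1) - 1 = a + b from by omega, show a + b - a = b from by omega,
    wP_eq _ a (by omega), wP_eq _ b (by omega), wD_eq _ (a+b) (by omega) (by omega),
    hchoose1]
  rw [Nat.cast_choose ℝ (by omega : 2*a+1 ≤ 2*(a+b+1))]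
  simp only [show (a+b+1) - a = b+1 from by omega, show (a+b+1) - b = a+1 from by omega,
    show 2*(a+b+1) - 2*a = 2*b+2 from by omega, show 2*(a+b+1) - 2*b = 2*a+2 from by omega,
    show 2*(a+b+1) - 1 = 2*a+2*b+1 from by omega,
    show 2*(a+b+1) - 1 - (a+b) = a+b+1 from by omega,
    show 2*(a+b+1) - (2*a+1) = 2*b+1 from by omega,
    show 2*(a+b+1) = 2*a+2*b+2 from by omega,
    show 2*a+2*b+2 - 2*a = 2*b+2 from by omega, show 2*a+2*b+2 - 2*b = 2*a+2 from by omega,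
    show 2*a+2*b+2 - 1 = 2*a+2*b+1 from by omega,
    show 2*a+2*b+2 - 1 - (a+b) = a+b+1 from by omega,
    show 2*a+2*b+2 - (2*a+1) = 2*b+1 from by omega,
    show 2*a+2*b+1 - (a+b) = a+b+1 from by omega]
  have e0 : ((2*a+2*b+2).factorial : ℝ) = (2*a+2*b+2) * ((2*a+2*b+1).factorial) := by
    rw [Nat.factorial_succ]; push_cast; ring
  have e1 : ((b+1).factorial : ℝ) = (b+1) * (b.factorial) := by
    rw [Nat.factorial_succ]; push_cast; ring
  have e2 : ((a+1).factorial : ℝ) = (a+1) * (a.factorial) := by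
    rw [Nat.factorial_succ]; push_cast; ring
  have e3 : ((2*b+2).factorial : ℝ) = (2*b+2) * ((2*b+1).factorial) := by
    rw [show 2*b+2 = (2*b+1)+1 from by omega, Nat.factorial_succ]; push_cast; ring
  have e4 : ((2*a+2).factorial : ℝ) = (2*a+2) * ((2*a+1).factorial) := by
    rw [show 2*a+2 = (2*a+1)+1 from by omega, Nat.factorial_succ]; push_cast; ring
  have e5 : ((a+b+1).factorial : ℝ) = (a+b+1) * ((a+b).factorial) := by
    rw [Nat.factorial_succ]; push_cast; ring
  have n1 : ((a.factorial : ℕ) : ℝ) ≠ 0 := by exact_mod_cast a.factorial_ne_zero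
  have n2 : ((b.factorial : ℕ) : ℝ) ≠ 0 := by exact_mod_cast b.factorial_ne_zero
  have n3 : (((a+b).factorial : ℕ) : ℝ) ≠ 0 := by exact_mod_cast (a+b).factorial_ne_zero
  have n4 : (((2*a+1).factorial : ℕ) : ℝ) ≠ 0 := by exact_mod_cast (2*a+1).factorial_ne_zero
  have n5 : (((2*b+1).factorial : ℕ) : ℝ) ≠ 0 := by exact_mod_cast (2*b+1).factorial_ne_zero
  have n6 : (((2*a+2*b+1).factorial : ℕ) : ℝ) ≠ 0 := by
    exact_mod_cast (2*a+2*b+1).factorial_ne_zero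
  have n7 : (((a+b+1+1).factorial : ℕ) : ℝ) ≠ 0 := by exact_mod_cast (a+b+1+1).factorial_ne_zero
  rw [e0, e1, e2, e3, e4, e5]
  push_cast
  field_simp
  ring

section helpers

lemma snoc_mk_lt {n : ℕ} {α : Type*} (p : Fin n → α) (x : α) (v : ℕ) (hv : v < n)
    (h2 : v < n + 1) : (Fin.snoc p x : Fin (n+1) → α) ⟨v, h2⟩ = p ⟨v, hv⟩ := by
  have h : (⟨v, h2⟩ : Fin (n+1)) = Fin.castSucc ⟨v, hv⟩ := rfl
  rw [h, Fin.snoc_castSucc]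

lemma snoc_mk_self {n : ℕ} {α : Type*} (p : Fin n → α) (x : α)
    (h2 : n < n + 1) : (Fin.snoc p x : Fin (n+1) → α) ⟨n, h2⟩ = x := by
  have h : (⟨n, h2⟩ : Fin (n+1)) = Fin.last n := rfl
  rw [h, Fin.snoc_last]

end helpers

lemma weno_key (r : ℕ) (hr : 2 ≤ r) (C : ℤ → ℤ → ℤ → ℝ)
    (hC : ∀ l k k1 : ℤ, C l k k1 =
      if k1 = k then ((2 * (l - r + k + 1) + 1 : ℤ) : ℝ) / ((2 * (l + 1) : ℤ) : ℝ)
      else ((2 * (r - k) - 1 : ℤ) : ℝ) / ((2 * (l + 1) : ℤ) : ℝ)) :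
    ∀ (m : ℕ) (hm : 1 ≤ m), m ≤ r - 1 → ∀ k0 : ℕ, k0 < r →
    (∑ j ∈ Finset.univ.filter (fun j : Fin m → Fin r =>
        ((j ⟨0, hm⟩ : ℕ) ≤ 1) ∧
        (∀ s s' : Fin m, (s' : ℕ) = (s : ℕ) + 1 →
          ((j s' : ℕ) = (j s : ℕ) ∨ (j s' : ℕ) = (j s : ℕ) + 1)) ∧
        (∀ s : Fin m, (s : ℕ) = m - 1 → (j s : ℕ) = k0)),
      ∏ s : Fin m,
        C ((2 * r : ℤ) - 2 - (s : ℤ))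
          (if (s : ℕ) = 0 then 0
           else ((j ⟨(s : ℕ) - 1, Nat.lt_of_le_of_lt (Nat.sub_le _ _) s.isLt⟩ : ℕ) : ℤ))
          ((j s : ℕ) : ℤ))
      = wF r m k0 := by
  intro m hm
  induction m, hm using Nat.le_induction with
  | base =>
    intro _ k0 hk0
    rw [Finset.sum_filter, ← Equiv.sum_comp (Equiv.funUnique (Fin 1) (Fin r)).symm]
    rw [Finset.sum_eq_single (⟨k0, hk0⟩ : Fin r)]
    rotate_left
    · intro x _ hx
      apply if_neg
      rintro ⟨-, -, h3⟩
      exact hx (Fin.ext (h3 ⟨0, one_pos⟩ rfl))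
    · intro h; exact absurd (Finset.mem_univ _) h
    by_cases hk01 : k0 ≤ 1
    · rw [if_pos ⟨hk01, fun s s' h => absurd h (by have := s.isLt; have := s'.isLt; omega),
        fun s _ => rfl⟩]
      rw [Fin.prod_univ_one, hC]
      have hr2 : (2:ℝ) ≤ (r:ℝ) := by exact_mod_cast hr
      interval_cases k0
      · rw [if_pos (by norm_num)]
        simp [wF, wP, wD, Finset.prod_range_one, Fin.val_zero]
        push_cast
        rw [div_eq_div_iff (by nlinarith) (by nlinarith)]
        ring
      · rw [if_neg (by norm_num)]
        simp [wF, wP, wD, Finset.prod_range_one, Fin.val_zero]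
        push_cast
        rw [div_eq_div_iff (by nlinarith) (by nlinarith)]
        ring
    · rw [if_neg]
      · simp [wF, Nat.choose_eq_zero_of_lt (by omega : 1 < k0)]
      · rintro ⟨h1, -, -⟩
        exact hk01 h1
  | succ m hm ih =>
    intro hmr k0 hk0
    have hmr' : m ≤ r - 1 := by omega
    have hm2 : m - 1 < m := by omega
    rw [Finset.sum_filter]
    rw [← Equiv.sum_comp (Fin.snocEquiv (fun _ : Fin (m+1) => Fin r))]
    rw [Fintype.sum_prod_type]
    simp only [Fin.snocEquiv_apply]
    rw [Finset.sum_eq_single (⟨k0, hk0⟩ : Fin r)]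
    rotate_left
    · -- other x give 0
      intro x _ hx
      apply Finset.sum_eq_zero
      intro j' _
      apply if_neg
      rintro ⟨-, -, h3⟩
      have := h3 (Fin.last m) (by simp)
      rw [Fin.snoc_last] at this
      exact hx (Fin.ext this)
    · intro h; exact absurd (Finset.mem_univ _) h
    have hWsnoc : ∀ j' : Fin m → Fin r,
        (∏ s : Fin (m+1),
          C ((2 * r : ℤ) - 2 - (s : ℤ))
            (if (s : ℕ) = 0 then 0
             else (((Fin.snoc j' (⟨k0, hk0⟩ : Fin r) : Fin (m+1) → Fin r)
               ⟨(s : ℕ) - 1, Nat.lt_of_le_of_lt (Nat.sub_le _ _) s.isLt⟩ : ℕ) : ℤ))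
            (((Fin.snoc j' (⟨k0, hk0⟩ : Fin r) : Fin (m+1) → Fin r) s : ℕ) : ℤ))
        = (∏ s : Fin m,
            C ((2 * r : ℤ) - 2 - (s : ℤ))
              (if (s : ℕ) = 0 then 0
               else ((j' ⟨(s : ℕ) - 1, Nat.lt_of_le_of_lt (Nat.sub_le _ _) s.isLt⟩ : ℕ) : ℤ))
              ((j' s : ℕ) : ℤ))
          * C ((2 * r : ℤ) - 2 - (m : ℤ)) ((j' ⟨m - 1, hm2⟩ : ℕ) : ℤ) ((k0 : ℕ) : ℤ) := by
      intro j'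
      rw [Fin.prod_univ_castSucc]
      congr 1
      · apply Finset.prod_congr rfl
        intro s _
        simp only [Fin.coe_castSucc, Fin.snoc_castSucc]
        by_cases hs0 : (s : ℕ) = 0
        · rw [if_pos hs0, if_pos hs0]
        · rw [if_neg hs0, if_neg hs0,
            snoc_mk_lt j' _ _ (by have := s.isLt; omega : (s:ℕ) - 1 < m)]
      · simp only [Fin.val_last, Fin.snoc_last]
        rw [if_neg (by omega : ¬ m = 0),
          snoc_mk_lt j' _ _ (by omega : m - 1 < m)]
    have hP3 : ∀ (j' : Fin m → Fin r) (k : ℕ),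
        (∀ s : Fin m, (s : ℕ) = m - 1 → (j' s : ℕ) = k) ↔ (j' ⟨m - 1, hm2⟩ : ℕ) = k := by
      intro j' k
      constructor
      · intro h; exact h _ rfl
      · intro h s hs
        have : s = ⟨m - 1, hm2⟩ := Fin.ext hs
        rw [this]; exact h
    have hcond : ∀ j' : Fin m → Fin r,
        ((((Fin.snoc j' (⟨k0, hk0⟩ : Fin r) : Fin (m+1) → Fin r) ⟨0, by omega⟩ : ℕ) ≤ 1) ∧
         (∀ s s' : Fin (m+1), (s' : ℕ) = (s : ℕ) + 1 →
           (((Fin.snoc j' (⟨k0, hk0⟩ : Fin r) : Fin (m+1) → Fin r) s' : ℕ)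
              = ((Fin.snoc j' (⟨k0, hk0⟩ : Fin r) : Fin (m+1) → Fin r) s : ℕ) ∨
            ((Fin.snoc j' (⟨k0, hk0⟩ : Fin r) : Fin (m+1) → Fin r) s' : ℕ)
              = ((Fin.snoc j' (⟨k0, hk0⟩ : Fin r) : Fin (m+1) → Fin r) s : ℕ) + 1)) ∧
         (∀ s : Fin (m+1), (s : ℕ) = m + 1 - 1 →
           ((Fin.snoc j' (⟨k0, hk0⟩ : Fin r) : Fin (m+1) → Fin r) s : ℕ) = k0))
        ↔ (((j' ⟨0, hm⟩ : ℕ) ≤ 1) ∧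
           (∀ s s' : Fin m, (s' : ℕ) = (s : ℕ) + 1 →
             ((j' s' : ℕ) = (j' s : ℕ) ∨ (j' s' : ℕ) = (j' s : ℕ) + 1)) ∧
           (k0 = (j' ⟨m - 1, hm2⟩ : ℕ) ∨ k0 = (j' ⟨m - 1, hm2⟩ : ℕ) + 1)) := by
      intro j'
      constructor
      · rintro ⟨h1, h2, h3⟩
        refine ⟨?_, ?_, ?_⟩
        · rwa [snoc_mk_lt j' _ 0 (by omega)] at h1
        · intro s s' hss
          have := h2 (Fin.castSucc s) (Fin.castSucc s') (by simpa using hss)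
          simpa [Fin.snoc_castSucc] using this
        · have := h2 (Fin.castSucc ⟨m - 1, hm2⟩) (Fin.last m)
            (by simp [Fin.val_last]; omega)
          rw [Fin.snoc_castSucc, Fin.snoc_last] at this
          exact this
      · rintro ⟨h1, h2, h3⟩
        refine ⟨?_, ?_, ?_⟩
        · rw [snoc_mk_lt j' _ 0 (by omega)]; exact h1
        · intro s s' hss
          by_cases hs' : (s' : ℕ) < m
          · have hs : (s : ℕ) < m := by omega
            have es : s = Fin.castSucc ⟨(s : ℕ), hs⟩ := Fin.ext rfl
            have es' : s' = Fin.castSucc ⟨(s' : ℕ), hs'⟩ := Fin.ext rfl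
            rw [es, es', Fin.snoc_castSucc, Fin.snoc_castSucc]
            exact h2 _ _ hss
          · have hs'm : (s' : ℕ) = m := by have := s'.isLt; omega
            have es' : s' = Fin.last m := Fin.ext (by simpa using hs'm)
            have es : s = Fin.castSucc ⟨m - 1, hm2⟩ := Fin.ext (by simp; omega)
            rw [es, es', Fin.snoc_castSucc, Fin.snoc_last]
            exact h3
        · intro s hs
          have es : s = Fin.last m := Fin.ext (by simpa using hs)
          rw [es, Fin.snoc_last]
    rcases Nat.eq_zero_or_pos k0 with rfl | hk0pos
    · -- k0 = 0
      have trans1 : ∀ j' : Fin m → Fin r,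
          (if (((j' ⟨0, hm⟩ : ℕ) ≤ 1) ∧
            (∀ s s' : Fin m, (s' : ℕ) = (s : ℕ) + 1 →
              ((j' s' : ℕ) = (j' s : ℕ) ∨ (j' s' : ℕ) = (j' s : ℕ) + 1)) ∧
            (0 = (j' ⟨m - 1, hm2⟩ : ℕ) ∨ 0 = (j' ⟨m - 1, hm2⟩ : ℕ) + 1))
          then (∏ s : Fin m,
            C ((2 * r : ℤ) - 2 - (s : ℤ))
              (if (s : ℕ) = 0 then 0
               else ((j' ⟨(s : ℕ) - 1, Nat.lt_of_le_of_lt (Nat.sub_le _ _) s.isLt⟩ : ℕ) : ℤ))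
              ((j' s : ℕ) : ℤ))
            * C ((2 * r : ℤ) - 2 - (m : ℤ)) ((j' ⟨m - 1, hm2⟩ : ℕ) : ℤ) ((0 : ℕ) : ℤ) else 0)
          = (if (((j' ⟨0, hm⟩ : ℕ) ≤ 1) ∧
              (∀ s s' : Fin m, (s' : ℕ) = (s : ℕ) + 1 →
                ((j' s' : ℕ) = (j' s : ℕ) ∨ (j' s' : ℕ) = (j' s : ℕ) + 1)) ∧
              (∀ s : Fin m, (s : ℕ) = m - 1 → (j' s : ℕ) = 0))
            then (∏ s : Fin m,
              C ((2 * r : ℤ) - 2 - (s : ℤ))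
                (if (s : ℕ) = 0 then 0
                 else ((j' ⟨(s : ℕ) - 1, Nat.lt_of_le_of_lt (Nat.sub_le _ _) s.isLt⟩ : ℕ) : ℤ))
                ((j' s : ℕ) : ℤ)) else 0)
            * C ((2 * r : ℤ) - 2 - (m : ℤ)) ((0 : ℕ) : ℤ) ((0 : ℕ) : ℤ) := by
        intro j'
        by_cases he : (j' ⟨m - 1, hm2⟩ : ℕ) = 0
        · by_cases hB : (((j' ⟨0, hm⟩ : ℕ) ≤ 1) ∧
              (∀ s s' : Fin m, (s' : ℕ) = (s : ℕ) + 1 →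
                ((j' s' : ℕ) = (j' s : ℕ) ∨ (j' s' : ℕ) = (j' s : ℕ) + 1)))
          · rw [if_pos ⟨hB.1, hB.2, Or.inl he.symm⟩, if_pos ⟨hB.1, hB.2, (hP3 j' 0).2 he⟩, he]
          · rw [if_neg (fun h => hB ⟨h.1, h.2.1⟩), if_neg (fun h => hB ⟨h.1, h.2.1⟩), zero_mul]
        · rw [if_neg ?_, if_neg (fun h => he ((hP3 j' 0).1 h.2.2)), zero_mul]
          rintro ⟨-, -, h3⟩
          rcases h3 with h | h
          · exact he h.symm
          · omega
      trans (∑ j' : Fin m → Fin r,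
          (if (((j' ⟨0, hm⟩ : ℕ) ≤ 1) ∧
            (∀ s s' : Fin m, (s' : ℕ) = (s : ℕ) + 1 →
              ((j' s' : ℕ) = (j' s : ℕ) ∨ (j' s' : ℕ) = (j' s : ℕ) + 1)) ∧
            (∀ s : Fin m, (s : ℕ) = m - 1 → (j' s : ℕ) = 0))
          then (∏ s : Fin m,
            C ((2 * r : ℤ) - 2 - (s : ℤ))
              (if (s : ℕ) = 0 then 0
               else ((j' ⟨(s : ℕ) - 1, Nat.lt_of_le_of_lt (Nat.sub_le _ _) s.isLt⟩ : ℕ) : ℤ))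
              ((j' s : ℕ) : ℤ)) else 0)
            * C ((2 * r : ℤ) - 2 - (m : ℤ)) ((0 : ℕ) : ℤ) ((0 : ℕ) : ℤ))
      · exact Finset.sum_congr rfl (fun j' _ => by
          rw [hWsnoc j', if_congr (hcond j') rfl rfl]; exact trans1 j')
      rw [← Finset.sum_mul, ← Finset.sum_filter,
        ih hmr' 0 (by omega)]
      have hCdiag : C ((2*r:ℤ)-2-(m:ℤ)) ((0:ℕ):ℤ) ((0:ℕ):ℤ)
          = ((2 * (((2*r:ℤ)-2-(m:ℤ)) - r + ((0:ℕ):ℤ) + 1) + 1 : ℤ) : ℝ)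
            / ((2 * (((2*r:ℤ)-2-(m:ℤ)) + 1) : ℤ) : ℝ) := by
        rw [hC]; exact if_pos rfl
      rw [hCdiag, wF_step0 r m hmr' hr]
      have h2 := lvl_ne r m hmr' hr
      congr 1
      push_cast
      rw [div_eq_div_iff (by push_cast at h2 ⊢; intro h; exact h2 (by linarith)) h2]
      ring
    · obtain ⟨a, rfl⟩ : ∃ a, k0 = a + 1 := ⟨k0 - 1, by omega⟩
      have trans1 : ∀ j' : Fin m → Fin r,
          (if (((j' ⟨0, hm⟩ : ℕ) ≤ 1) ∧
            (∀ s s' : Fin m, (s' : ℕ) = (s : ℕ) + 1 →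
              ((j' s' : ℕ) = (j' s : ℕ) ∨ (j' s' : ℕ) = (j' s : ℕ) + 1)) ∧
            (a + 1 = (j' ⟨m - 1, hm2⟩ : ℕ) ∨ a + 1 = (j' ⟨m - 1, hm2⟩ : ℕ) + 1))
          then (∏ s : Fin m,
            C ((2 * r : ℤ) - 2 - (s : ℤ))
              (if (s : ℕ) = 0 then 0
               else ((j' ⟨(s : ℕ) - 1, Nat.lt_of_le_of_lt (Nat.sub_le _ _) s.isLt⟩ : ℕ) : ℤ))
              ((j' s : ℕ) : ℤ))
            * C ((2 * r : ℤ) - 2 - (m : ℤ)) ((j' ⟨m - 1, hm2⟩ : ℕ) : ℤ) ((a + 1 : ℕ) : ℤ) else 0)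
          = (if (((j' ⟨0, hm⟩ : ℕ) ≤ 1) ∧
              (∀ s s' : Fin m, (s' : ℕ) = (s : ℕ) + 1 →
                ((j' s' : ℕ) = (j' s : ℕ) ∨ (j' s' : ℕ) = (j' s : ℕ) + 1)) ∧
              (∀ s : Fin m, (s : ℕ) = m - 1 → (j' s : ℕ) = a + 1))
            then (∏ s : Fin m,
              C ((2 * r : ℤ) - 2 - (s : ℤ))
                (if (s : ℕ) = 0 then 0
                 else ((j' ⟨(s : ℕ) - 1, Nat.lt_of_le_of_lt (Nat.sub_le _ _) s.isLt⟩ : ℕ) : ℤ))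
                ((j' s : ℕ) : ℤ)) else 0)
              * C ((2 * r : ℤ) - 2 - (m : ℤ)) ((a + 1 : ℕ) : ℤ) ((a + 1 : ℕ) : ℤ)
            + (if (((j' ⟨0, hm⟩ : ℕ) ≤ 1) ∧
              (∀ s s' : Fin m, (s' : ℕ) = (s : ℕ) + 1 →
                ((j' s' : ℕ) = (j' s : ℕ) ∨ (j' s' : ℕ) = (j' s : ℕ) + 1)) ∧
              (∀ s : Fin m, (s : ℕ) = m - 1 → (j' s : ℕ) = a))
            then (∏ s : Fin m,
              C ((2 * r : ℤ) - 2 - (s : ℤ))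
                (if (s : ℕ) = 0 then 0
                 else ((j' ⟨(s : ℕ) - 1, Nat.lt_of_le_of_lt (Nat.sub_le _ _) s.isLt⟩ : ℕ) : ℤ))
                ((j' s : ℕ) : ℤ)) else 0)
              * C ((2 * r : ℤ) - 2 - (m : ℤ)) ((a : ℕ) : ℤ) ((a + 1 : ℕ) : ℤ) := by
        intro j'
        by_cases hB : (((j' ⟨0, hm⟩ : ℕ) ≤ 1) ∧
            (∀ s s' : Fin m, (s' : ℕ) = (s : ℕ) + 1 →
              ((j' s' : ℕ) = (j' s : ℕ) ∨ (j' s' : ℕ) = (j' s : ℕ) + 1)))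
        · by_cases he1 : (j' ⟨m - 1, hm2⟩ : ℕ) = a + 1
          · rw [if_pos ⟨hB.1, hB.2, Or.inl he1.symm⟩, if_pos ⟨hB.1, hB.2, (hP3 j' (a+1)).2 he1⟩,
              if_neg (fun h => by have h' := (hP3 j' a).1 h.2.2; omega), zero_mul, add_zero, he1]
          · by_cases he2 : (j' ⟨m - 1, hm2⟩ : ℕ) = a
            · rw [if_pos ⟨hB.1, hB.2, Or.inr (by omega)⟩,
                if_neg (fun h => by have h' := (hP3 j' (a+1)).1 h.2.2; omega),
                if_pos ⟨hB.1, hB.2, (hP3 j' a).2 he2⟩, zero_mul, zero_add, he2]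
            · rw [if_neg ?_, if_neg (fun h => he1 ((hP3 j' (a+1)).1 h.2.2)),
                if_neg (fun h => he2 ((hP3 j' a).1 h.2.2)), zero_mul, zero_mul, add_zero]
              rintro ⟨-, -, h3⟩
              rcases h3 with h | h
              · exact he1 h.symm
              · exact he2 (by omega)
        · rw [if_neg (fun h => hB ⟨h.1, h.2.1⟩), if_neg (fun h => hB ⟨h.1, h.2.1⟩),
            if_neg (fun h => hB ⟨h.1, h.2.1⟩), zero_mul, zero_mul, add_zero]
      trans (∑ j' : Fin m → Fin r,
          ((if (((j' ⟨0, hm⟩ : ℕ) ≤ 1) ∧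
            (∀ s s' : Fin m, (s' : ℕ) = (s : ℕ) + 1 →
              ((j' s' : ℕ) = (j' s : ℕ) ∨ (j' s' : ℕ) = (j' s : ℕ) + 1)) ∧
            (∀ s : Fin m, (s : ℕ) = m - 1 → (j' s : ℕ) = a + 1))
          then (∏ s : Fin m,
            C ((2 * r : ℤ) - 2 - (s : ℤ))
              (if (s : ℕ) = 0 then 0
               else ((j' ⟨(s : ℕ) - 1, Nat.lt_of_le_of_lt (Nat.sub_le _ _) s.isLt⟩ : ℕ) : ℤ))
              ((j' s : ℕ) : ℤ)) else 0)
            * C ((2 * r : ℤ) - 2 - (m : ℤ)) ((a + 1 : ℕ) : ℤ) ((a + 1 : ℕ) : ℤ)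
          + (if (((j' ⟨0, hm⟩ : ℕ) ≤ 1) ∧
            (∀ s s' : Fin m, (s' : ℕ) = (s : ℕ) + 1 →
              ((j' s' : ℕ) = (j' s : ℕ) ∨ (j' s' : ℕ) = (j' s : ℕ) + 1)) ∧
            (∀ s : Fin m, (s : ℕ) = m - 1 → (j' s : ℕ) = a))
          then (∏ s : Fin m,
            C ((2 * r : ℤ) - 2 - (s : ℤ))
              (if (s : ℕ) = 0 then 0
               else ((j' ⟨(s : ℕ) - 1, Nat.lt_of_le_of_lt (Nat.sub_le _ _) s.isLt⟩ : ℕ) : ℤ))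
              ((j' s : ℕ) : ℤ)) else 0)
            * C ((2 * r : ℤ) - 2 - (m : ℤ)) ((a : ℕ) : ℤ) ((a + 1 : ℕ) : ℤ)))
      · exact Finset.sum_congr rfl (fun j' _ => by
          rw [hWsnoc j', if_congr (hcond j') rfl rfl]; exact trans1 j')
      rw [Finset.sum_add_distrib,
        ← Finset.sum_mul, ← Finset.sum_mul, ← Finset.sum_filter, ← Finset.sum_filter,
        ih hmr' (a+1) hk0, ih hmr' a (by omega)]
      have hCdiag : C ((2*r:ℤ)-2-(m:ℤ)) ((a+1:ℕ):ℤ) ((a+1:ℕ):ℤ)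
          = ((2 * (((2*r:ℤ)-2-(m:ℤ)) - r + ((a+1:ℕ):ℤ) + 1) + 1 : ℤ) : ℝ)
            / ((2 * (((2*r:ℤ)-2-(m:ℤ)) + 1) : ℤ) : ℝ) := by
        rw [hC]; exact if_pos rfl
      have hCoff : C ((2*r:ℤ)-2-(m:ℤ)) ((a:ℕ):ℤ) ((a+1:ℕ):ℤ)
          = ((2 * ((r:ℤ) - ((a:ℕ):ℤ)) - 1 : ℤ) : ℝ)
            / ((2 * (((2*r:ℤ)-2-(m:ℤ)) + 1) : ℤ) : ℝ) := by
        rw [hC]; refine if_neg ?_; push_cast; omega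
      rw [hCdiag, hCoff, wF_step r m a hmr' hr]
      have h2 := lvl_ne r m hmr' hr
      have h2' : ((2 * ((2 * (r:ℝ) - 2 - (m:ℝ)) + 1))) ≠ 0 := by
        push_cast at h2 ⊢; intro h; exact h2 (by linarith)
      push_cast
      field_simp
      ring

theorem weno_dyadic_tree_weights (r : ℕ) (hr : 2 ≤ r)
    (C : ℤ → ℤ → ℤ → ℝ)
    (hC : ∀ l k k1 : ℤ, C l k k1 =
      if k1 = k then ((2 * (l - r + k + 1) + 1 : ℤ) : ℝ) / ((2 * (l + 1) : ℤ) : ℝ)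
      else ((2 * (r - k) - 1 : ℤ) : ℝ) / ((2 * (l + 1) : ℤ) : ℝ))
    (k0 : ℕ) (hk0 : k0 < r) :
    ∑ j ∈ Finset.univ.filter (fun j : Fin (r - 1) → Fin r =>
        ((j ⟨0, by omega⟩ : ℕ) ≤ 1) ∧
        (∀ s s' : Fin (r - 1), (s' : ℕ) = (s : ℕ) + 1 →
          ((j s' : ℕ) = (j s : ℕ) ∨ (j s' : ℕ) = (j s : ℕ) + 1)) ∧
        (∀ s : Fin (r - 1), (s : ℕ) = r - 2 → (j s : ℕ) = k0)),
      ∏ s : Fin (r - 1),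
        C ((2 * r : ℤ) - 2 - (s : ℤ))
          (if (s : ℕ) = 0 then 0
           else ((j ⟨(s : ℕ) - 1, Nat.lt_of_le_of_lt (Nat.sub_le _ _) s.isLt⟩ : ℕ) : ℤ))
          ((j s : ℕ) : ℤ)
      = (Nat.choose (2 * r) (2 * k0 + 1) : ℝ) / 2 ^ (2 * r - 1) := by
  have h := weno_key r hr C hC (r - 1) (by omega) (le_refl _) k0 hk0
  rw [wF_final r k0 hr hk0] at h
  rw [show 2 * k0 + 1 = 2 * k0 + 1 from rfl]
  exact h
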